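/- Let L, π, Ψ, δ be positive real numbers with 2Ψπ > L. Define p(y) = (L/(2Ψ))·(2Ψπ/L)^(y/δ). Then p is differentiable with derivative p'(y) = p(y)·ln(2Ψπ/L)/δ, and for every real α with α ≥ ln(2Ψπ/L) and α > 0, and every y ∈ [0, δ), the Differential Allocation-Payment Relationship with zero marginal cost and conjugate derivative δ holds: p(y) ≥ (1/α)·δ·(deriv p y). -/

import Mathlib

/-- First branch of the generation dual update function:
`p(y) = (L/(2Ψ))·(2Ψπ/L)^(y/δ)` is differentiable with
`p'(y) = p(y)·ln(2Ψπ/L)/δ`, and satisfies the Differential Allocation-Payment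
Relationship with zero marginal cost and conjugate derivative `δ` on `[0, δ)`. -/
theorem generation_dual_first_branch
    (L π Ψ δ : ℝ) (hL : 0 < L) (hπ : 0 < π) (hΨ : 0 < Ψ) (hδ : 0 < δ)
    (hπL : 2 * Ψ * π > L)
    (p : ℝ → ℝ)
    (hp : ∀ y, p y = (L / (2 * Ψ)) * (2 * Ψ * π / L) ^ (y / δ)) :
    (∀ y : ℝ, DifferentiableAt ℝ p y ∧
        deriv p y = p y * Real.log (2 * Ψ * π / L) / δ) ∧
    (∀ α : ℝ, α ≥ Real.log (2 * Ψ * π / L) → 0 < α →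
      ∀ y ∈ Set.Ico (0 : ℝ) δ, p y ≥ (1 / α) * δ * deriv p y) := by
  set b : ℝ := 2 * Ψ * π / L with hb
  have hb1 : 1 < b := (one_lt_div hL).2 hπL
  have hb0 : 0 < b := lt_trans one_pos hb1
  have hc0 : 0 < L / (2 * Ψ) := div_pos hL (by linarith)
  have hfun : p = fun y => (L / (2 * Ψ)) * b ^ (y / δ) := funext hp
  have hderiv : ∀ y : ℝ, HasDerivAt p (p y * Real.log b / δ) y := by
    intro y
    have h1 : HasDerivAt (fun y : ℝ => y / δ) (1 / δ) y := by
      simpa using (hasDerivAt_id y).div_const δ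
    have h2 : HasDerivAt (fun y : ℝ => b ^ (y / δ))
        (b ^ (y / δ) * Real.log b * (1 / δ)) y := by
      have := ((Real.hasStrictDerivAt_const_rpow hb0 (y / δ)).hasDerivAt).comp y h1
      exact this
    have h3 := h2.const_mul (L / (2 * Ψ))
    have h4 : p y * Real.log b / δ = L / (2 * Ψ) * (b ^ (y / δ) * Real.log b * (1 / δ)) := by
      rw [hp y]; ring
    rw [h4, hfun]; exact h3
  constructor
  · intro y
    exact ⟨(hderiv y).differentiableAt, (hderiv y).deriv⟩
  · intro α hα hα0 y hy
    rw [(hderiv y).deriv]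
    have hpy : 0 < p y := by
      rw [hp y]
      exact mul_pos hc0 (Real.rpow_pos_of_pos hb0 _)
    have hlog : Real.log b ≤ α := hα
    have : (1 / α) * δ * (p y * Real.log b / δ) = p y * (Real.log b / α) := by
      field_simp
    rw [this]
    nlinarith [div_le_one_of_le₀ hlog hα0.le, hpy]
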